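/- Let V_1, ..., V_n be subspaces of a vector space V over a field of characteristic zero with V = V_1 ⊕ ... ⊕ V_n, and let p_i : V → V be the projection onto ⊕_{j≠i} V_j killing V_i. Consider the induced maps Λ^n(p_i) on the n-th exterior power Λ^n(V). Then the operators Λ^n(p_i) pairwise commute, the operator e = ∏_{i=1}^{n} (id − Λ^n(p_i)) is idempotent, and the image of e equals the subspace of Λ^n(V) spanned by all wedges v_1 ∧ v_2 ∧ ... ∧ v_n with v_i ∈ V_i. -/

import Mathlib

open ExteriorAlgebra

theorem stmt9 {K V : Type*} [Field K] [CharZero K] [AddCommGroup V] [Module K V]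
    (n : ℕ) (Vs : Fin n → Submodule K V) (hVs : DirectSum.IsInternal Vs)
    (p : Fin n → (V →ₗ[K] V))
    (hker : ∀ i, ∀ x ∈ Vs i, p i x = 0)
    (hid : ∀ i j, i ≠ j → ∀ x ∈ Vs j, p i x = x)
    -- `Λp i` is the endomorphism of the `n`-th exterior power induced by `p i`,
    -- characterized by its effect on wedges `v_1 ∧ ... ∧ v_n`:
    (Λp : Fin n → (↥(⋀[K]^n V) →ₗ[K] ↥(⋀[K]^n V)))
    (hΛp : ∀ (i : Fin n) (v : Fin n → V),
      ((Λp i ⟨ιMulti K n v, ιMulti_range K n (Set.mem_range_self v)⟩ :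
          ↥(⋀[K]^n V)) : ExteriorAlgebra K V) =
        ιMulti K n (fun k => p i (v k))) :
    (∀ i j : Fin n, Commute (Λp i) (Λp j)) ∧
    IsIdempotentElem
      ((List.ofFn (fun i : Fin n =>
        (1 : Module.End K ↥(⋀[K]^n V)) - Λp i)).prod) ∧
    LinearMap.range
        ((List.ofFn (fun i : Fin n =>
          (1 : Module.End K ↥(⋀[K]^n V)) - Λp i)).prod) =
      Submodule.span K
        {x : ↥(⋀[K]^n V) | ∃ v : Fin n → V,
          (∀ i, v i ∈ Vs i) ∧ (x : ExteriorAlgebra K V) = ιMulti K n v} := by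
  classical
  -- decomposition of an arbitrary vector into components
  have hdecomp : ∀ v : V, (∀ j, v - p j v ∈ Vs j) ∧ (∑ j, (v - p j v)) = v := by
    intro v
    have hv : v ∈ ⨆ j, Vs j := by
      rw [hVs.submodule_iSup_eq_top]; trivial
    refine Submodule.iSup_induction (motive := fun v =>
        (∀ j, v - p j v ∈ Vs j) ∧ (∑ j, (v - p j v)) = v) Vs hv ?_ ?_ ?_
    · intro k w hw
      constructor
      · intro j
        by_cases hjk : j = k
        · subst hjk; rw [hker j w hw, sub_zero]; exact hw
        · rw [hid j k hjk w hw, sub_self]; exact Submodule.zero_mem _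
      · rw [Finset.sum_eq_single k]
        · rw [hker k w hw, sub_zero]
        · intro j _ hjk
          rw [hid j k hjk w hw, sub_self]
        · intro h; exact absurd (Finset.mem_univ k) h
    · simp
    · intro a b ha hb
      refine ⟨fun j => ?_, ?_⟩
      · have : a + b - p j (a + b) = (a - p j a) + (b - p j b) := by
          rw [map_add]; abel
        rw [this]; exact Submodule.add_mem _ (ha.1 j) (hb.1 j)
      · have : ∀ j, a + b - p j (a + b) = (a - p j a) + (b - p j b) := by
          intro j; rw [map_add]; abel
        simp_rw [this]
        rw [Finset.sum_add_distrib, ha.2, hb.2]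
  -- the set of "pure" wedges
  set S : Set ↥(⋀[K]^n V) :=
    {x | ∃ (v : Fin n → V) (f : Fin n → Fin n),
      (∀ k, v k ∈ Vs (f k)) ∧ (x : ExteriorAlgebra K V) = ιMulti K n v} with hS
  -- pure wedges span the exterior power
  have hspan : Submodule.span K S = ⊤ := by
    apply Submodule.map_injective_of_injective (Submodule.injective_subtype (⋀[K]^n V))
    rw [Submodule.map_span, Submodule.map_top, Submodule.range_subtype]
    apply le_antisymm
    · rw [Submodule.span_le]
      rintro _ ⟨x, -, rfl⟩
      exact x.2
    · refine le_trans (le_of_eq (ιMulti_span_fixedDegree K n).symm) ?_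
      rw [Submodule.span_le]
      rintro _ ⟨v, rfl⟩
      have h2 : ιMulti K n v
          = (ιMulti K n (M := V)).toMultilinearMap
              (fun k => ∑ j, (v k - p j (v k))) := by
        simp only [AlternatingMap.coe_multilinearMap]
        congr 1
        funext k
        exact ((hdecomp (v k)).2).symm
      rw [h2, MultilinearMap.map_sum]
      apply Submodule.sum_mem
      intro r _
      apply Submodule.subset_span
      refine ⟨⟨ιMulti K n (fun k => v k - p (r k) (v k)),
        ιMulti_range K n (Set.mem_range_self _)⟩,
        ⟨_, r, fun k => (hdecomp (v k)).1 (r k), rfl⟩, ?_⟩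
      simp [AlternatingMap.coe_multilinearMap]
  -- action of Λp i on a pure wedge
  have hact : ∀ (x : ↥(⋀[K]^n V)) (v : Fin n → V) (f : Fin n → Fin n),
      (∀ k, v k ∈ Vs (f k)) → ((x : ExteriorAlgebra K V) = ιMulti K n v) →
      ∀ i : Fin n, (i ∈ Set.range f → Λp i x = 0) ∧ (i ∉ Set.range f → Λp i x = x) := by
    intro x v f hv hx i
    have hx' : x = ⟨ιMulti K n v, ιMulti_range K n (Set.mem_range_self v)⟩ :=
      Subtype.ext hx
    have hcoe : ((Λp i x : ↥(⋀[K]^n V)) : ExteriorAlgebra K V)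
        = ιMulti K n (fun k => p i (v k)) := by
      rw [hx']; exact hΛp i v
    constructor
    · rintro ⟨k, rfl⟩
      have h0 : p (f k) (v k) = 0 := hker (f k) (v k) (hv k)
      have : ιMulti K n (fun k' => p (f k) (v k')) = 0 :=
        (ιMulti K n (M := V)).toMultilinearMap.map_coord_zero k h0
      apply Subtype.ext
      rw [hcoe]
      simpa [AlternatingMap.coe_multilinearMap] using this
    · intro hi
      have : (fun k => p i (v k)) = v := by
        funext k
        have hik : i ≠ f k := fun h => hi ⟨k, h.symm⟩
        exact hid i (f k) hik (v k) (hv k)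
      apply Subtype.ext
      rw [hcoe, this, hx]
  set g : Fin n → Module.End K ↥(⋀[K]^n V) := fun i => 1 - Λp i with hg
  -- product lemmas on pure wedges
  have hfact : ∀ (x : ↥(⋀[K]^n V)) (v : Fin n → V) (f : Fin n → Fin n),
      (∀ k, v k ∈ Vs (f k)) → ((x : ExteriorAlgebra K V) = ιMulti K n v) →
      ∀ i : Fin n, (i ∈ Set.range f → g i x = x) ∧ (i ∉ Set.range f → g i x = 0) := by
    intro x v f hv hx i
    have h := hact x v f hv hx i
    constructor
    · intro hi
      have : Λp i x = 0 := h.1 hi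
      simp [hg, LinearMap.sub_apply, this]
    · intro hi
      have : Λp i x = x := h.2 hi
      simp [hg, LinearMap.sub_apply, this]
  have hprod1 : ∀ (l : List (Fin n)) (x : ↥(⋀[K]^n V)) (v : Fin n → V)
      (f : Fin n → Fin n), (∀ k, v k ∈ Vs (f k)) →
      ((x : ExteriorAlgebra K V) = ιMulti K n v) →
      (∀ i ∈ l, i ∈ Set.range f) → ((l.map g).prod) x = x := by
    intro l
    induction l with
    | nil => intro x v f hv hx _; simp
    | cons a l ih =>
      intro x v f hv hx hall
      have h1 : ((l.map g).prod) x = x :=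
        ih x v f hv hx (fun i hi => hall i (List.mem_cons_of_mem a hi))
      simp only [List.map_cons, List.prod_cons, Module.End.mul_apply, h1]
      exact (hfact x v f hv hx a).1 (hall a (List.mem_cons_self))
  have hprod0 : ∀ (l : List (Fin n)) (x : ↥(⋀[K]^n V)) (v : Fin n → V)
      (f : Fin n → Fin n), (∀ k, v k ∈ Vs (f k)) →
      ((x : ExteriorAlgebra K V) = ιMulti K n v) →
      (∃ i ∈ l, i ∉ Set.range f) → ((l.map g).prod) x = 0 := by
    intro l
    induction l with
    | nil => rintro x v f hv hx ⟨i, hi, -⟩; exact absurd hi List.not_mem_nil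
    | cons a l ih =>
      intro x v f hv hx hex
      simp only [List.map_cons, List.prod_cons, Module.End.mul_apply]
      by_cases hl : ∃ i ∈ l, i ∉ Set.range f
      · rw [ih x v f hv hx hl, map_zero]
      · push_neg at hl
        rw [hprod1 l x v f hv hx hl]
        obtain ⟨i, hi, hif⟩ := hex
        rcases List.mem_cons.mp hi with rfl | hi'
        · exact (hfact x v f hv hx i).2 hif
        · exact absurd (hl i hi') hif
  set e : Module.End K ↥(⋀[K]^n V) := (List.ofFn g).prod with he
  have heq : List.ofFn g = (List.finRange n).map g := List.ofFn_eq_map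
  -- e on a pure wedge
  have hesurj : ∀ (x : ↥(⋀[K]^n V)) (v : Fin n → V) (f : Fin n → Fin n),
      (∀ k, v k ∈ Vs (f k)) → ((x : ExteriorAlgebra K V) = ιMulti K n v) →
      Function.Surjective f → e x = x := by
    intro x v f hv hx hf
    rw [he, heq]
    exact hprod1 _ x v f hv hx (fun i _ => hf i)
  have hensurj : ∀ (x : ↥(⋀[K]^n V)) (v : Fin n → V) (f : Fin n → Fin n),
      (∀ k, v k ∈ Vs (f k)) → ((x : ExteriorAlgebra K V) = ιMulti K n v) →
      ¬ Function.Surjective f → e x = 0 := by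
    intro x v f hv hx hf
    rw [he, heq]
    apply hprod0 _ x v f hv hx
    rw [Function.Surjective] at hf
    push_neg at hf
    obtain ⟨i, hi⟩ := hf
    exact ⟨i, List.mem_finRange i, fun ⟨k, hk⟩ => hi k hk⟩
  refine ⟨?_, ?_, ?_⟩
  · -- commutativity
    intro i j
    apply LinearMap.ext_on hspan
    rintro x ⟨v, f, hv, hx⟩
    have hi := hact x v f hv hx i
    have hj := hact x v f hv hx j
    by_cases hif : i ∈ Set.range f <;> by_cases hjf : j ∈ Set.range f
    · simp [Module.End.mul_apply, hi.1 hif, hj.1 hjf, map_zero]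
    · simp [Module.End.mul_apply, hi.1 hif, hj.2 hjf, map_zero]
    · simp [Module.End.mul_apply, hi.2 hif, hj.1 hjf, map_zero]
    · simp [Module.End.mul_apply, hi.2 hif, hj.2 hjf]
  · -- idempotency
    show e * e = e
    apply LinearMap.ext_on hspan
    rintro x ⟨v, f, hv, hx⟩
    rw [Module.End.mul_apply]
    by_cases hf : Function.Surjective f
    · rw [hesurj x v f hv hx hf, hesurj x v f hv hx hf]
    · rw [hensurj x v f hv hx hf, map_zero]
  · -- range
    set T : Set ↥(⋀[K]^n V) :=
      {x | ∃ v : Fin n → V, (∀ i, v i ∈ Vs i) ∧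
        (x : ExteriorAlgebra K V) = ιMulti K n v} with hT
    show LinearMap.range e = Submodule.span K T
    have h1 : LinearMap.range e = Submodule.map e (Submodule.span K S) := by
      rw [hspan, Submodule.map_top]
    rw [h1, Submodule.map_span]
    apply le_antisymm
    · rw [Submodule.span_le]
      rintro _ ⟨x, ⟨v, f, hv, hx⟩, rfl⟩
      by_cases hf : Function.Surjective f
      · rw [hesurj x v f hv hx hf]
        -- x is a pure wedge with bijective f; reorder it
        have hbij : Function.Bijective f := hf.bijective_of_finite
        set σ : Equiv.Perm (Fin n) := Equiv.ofBijective f hbij with hσ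
        set w : Fin n → V := v ∘ σ.symm with hw
        have hwmem : ∀ i, w i ∈ Vs i := by
          intro i
          have := hv (σ.symm i)
          have h2 : f (σ.symm i) = i := σ.apply_symm_apply i
          rwa [h2] at this
        have hveq : w ∘ σ = v := by
          funext k
          simp [hw, hσ]
        have hperm : (ιMulti K n (M := V)) (w ∘ ⇑σ) = Equiv.Perm.sign σ • (ιMulti K n (M := V)) w :=
          (ιMulti K n (M := V)).map_perm w σ
        set y : ↥(⋀[K]^n V) := ⟨ιMulti K n w, ιMulti_range K n (Set.mem_range_self w)⟩
          with hy
        have hymem : y ∈ Submodule.span K T :=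
          Submodule.subset_span ⟨w, hwmem, rfl⟩
        rcases Int.units_eq_one_or (Equiv.Perm.sign σ) with hs | hs
        · have : x = y := by
            apply Subtype.ext
            rw [hx, ← hveq, hperm, hs, one_smul]
          rw [this]; exact hymem
        · have : x = -y := by
            apply Subtype.ext
            rw [hx, ← hveq, hperm, hs]
            simp [hy]
          rw [this]; exact Submodule.neg_mem _ hymem
      · rw [hensurj x v f hv hx hf]
        exact Submodule.zero_mem _
    · rw [Submodule.span_le]
      rintro x ⟨v, hv, hx⟩
      have hid' : Function.Surjective (id : Fin n → Fin n) := Function.surjective_id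
      have hx' : e x = x := hesurj x v id (fun k => hv k) hx hid'
      apply Submodule.subset_span
      exact ⟨x, ⟨v, id, (fun k => hv k), hx⟩, hx'⟩
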